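/- arXiv:2207.00992 — 5 statements merged into one kernel-verified Lean document; each statement's English description precedes it below -/
import Mathlib

section
/- For every real number a, the complex-valued integral ∫_0^a Log(1 − e^{2πiθ}) dθ equals (1/(2πi))·(π²/6 − Li₂(e^{2πia})), where Log denotes the principal branch of the complex logarithm (the integrand is defined for all θ with θ ∉ ℤ and is integrable, its real part having only logarithmic singularities). -/
open Complex Real MeasureTheory Filter

noncomputable def ee (θ : ℝ) : ℂ := Complex.exp (2 * (Real.pi : ℂ) * Complex.I * (θ : ℂ))
noncomputable def Li2 (z : ℂ) : ℂ := ∑' n : ℕ, z ^ (n + 1) / ((n : ℂ) + 1) ^ 2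
noncomputable def hh (θ : ℝ) : ℝ := Real.log ‖1 - ee θ‖
lemma cont_ee : Continuous ee := Complex.continuous_exp.comp (by continuity)
lemma abs_ee (θ : ℝ) : ‖ee θ‖ = 1 := by
  rw [ee, Complex.norm_exp]
  have : (2 * (Real.pi : ℂ) * Complex.I * (θ : ℂ)).re = 0 := by simp
  simp [this]
lemma norm_natsucc (n : ℕ) : ‖((n:ℂ)+1)‖ = (n:ℝ)+1 := by
  rw [show ((n:ℂ) + 1) = ((n+1:ℕ):ℂ) by push_cast; ring, Complex.norm_natCast]
  push_cast; ring
lemma summable_one_div_sq : Summable (fun n : ℕ => 1 / ((n:ℝ)+1)^2) := by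
  have := (summable_nat_add_iff (f := fun n : ℕ => 1 / (n:ℝ)^2) 1).mpr
    (Real.summable_one_div_nat_pow.mpr one_lt_two)
  exact this.congr (by intro n; push_cast; ring_nf)
lemma term_bound {z : ℂ} (hz : ‖z‖ ≤ 1) (n : ℕ) :
    ‖z ^ (n + 1) / ((n : ℂ) + 1) ^ 2‖ ≤ 1 / ((n:ℝ)+1)^2 := by
  have h1 : ‖z‖ ^ (n+1) ≤ 1 := pow_le_one₀ (norm_nonneg z) hz
  simp only [norm_div, norm_pow, norm_natsucc]
  gcongr

-- Basel
lemma li2_one : Li2 1 = (Real.pi:ℂ)^2/6 := by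
  have hb : HasSum (fun n : ℕ => (1:ℝ) / ((n:ℝ)+1)^2) (π^2/6) := by
    have h := (hasSum_nat_add_iff (f := fun n : ℕ => (1:ℝ)/(n:ℝ)^2) 1).mpr
      (by simpa using hasSum_zeta_two)
    have hfe : (fun n : ℕ => (1:ℝ)/((n+1:ℕ):ℝ)^2) = fun n : ℕ => (1:ℝ)/((n:ℝ)+1)^2 := by
      funext n; push_cast; ring
    rwa [hfe] at h
  have hc : HasSum (fun n : ℕ => ((1:ℂ)) ^ (n+1) / ((n:ℂ)+1)^2) (((π^2/6 : ℝ) : ℂ)) := by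
    have h := Complex.ofRealCLM.hasSum hb
    have hfe : (fun n : ℕ => Complex.ofRealCLM ((1:ℝ)/((n:ℝ)+1)^2))
        = fun n : ℕ => ((1:ℂ)) ^ (n+1) / ((n:ℂ)+1)^2 := by
      funext n
      simp only [Complex.ofRealCLM_apply]
      push_cast
      rw [one_pow]
    rwa [hfe] at h
  rw [Li2, hc.tsum_eq]
  push_cast
  ring

-- radial limit of Li2
lemma li2_radial {z : ℂ} (hz : ‖z‖ ≤ 1) :
    Tendsto (fun r : ℝ => Li2 ((r:ℂ) * z)) (nhdsWithin 1 (Set.Iio 1)) (nhds (Li2 z)) := by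
  simp only [Li2]
  apply tendsto_tsum_of_dominated_convergence (bound := fun n : ℕ => 1/((n:ℝ)+1)^2)
    summable_one_div_sq
  · intro k
    have hcont : Continuous (fun r : ℝ => ((r:ℂ) * z) ^ (k+1) / ((k:ℂ)+1)^2) := by
      apply Continuous.div_const
      exact (Complex.continuous_ofReal.mul continuous_const).pow (k+1)
    refine Tendsto.mono_left ?_ nhdsWithin_le_nhds
    simpa using hcont.tendsto 1
  · have hev : Set.Ioo (0:ℝ) 1 ∈ nhdsWithin (1:ℝ) (Set.Iio 1) :=
      Ioo_mem_nhdsLT_of_mem (by norm_num : (1:ℝ) ∈ Set.Ioc 0 1)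
    filter_upwards [hev] with r hr k
    apply term_bound
    rw [norm_mul, Complex.norm_real, Real.norm_eq_abs, _root_.abs_of_nonneg hr.1.le]
    calc r * ‖z‖ ≤ 1 * 1 := by
          apply mul_le_mul hr.2.le hz (norm_nonneg z) zero_le_one
      _ = 1 := by norm_num

lemma ae_ne_one : ∀ᵐ θ : ℝ, ee θ ≠ 1 := by
  have hsub : {θ : ℝ | ee θ = 1} ⊆ Set.range ((↑) : ℤ → ℝ) := by
    intro θ hθ
    rw [Set.mem_setOf_eq, ee, Complex.exp_eq_one_iff] at hθ
    obtain ⟨n, hn⟩ := hθ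
    refine ⟨n, ?_⟩
    have hπ : (Real.pi:ℂ) ≠ 0 := Complex.ofReal_ne_zero.mpr Real.pi_ne_zero
    have h2 : (2:ℂ) * (Real.pi:ℂ) * Complex.I ≠ 0 :=
      mul_ne_zero (mul_ne_zero two_ne_zero hπ) Complex.I_ne_zero
    have h3 : (2:ℂ) * (Real.pi:ℂ) * Complex.I * (θ:ℂ)
        = (2:ℂ) * (Real.pi:ℂ) * Complex.I * (n:ℂ) := by linear_combination hn
    have h4 : (θ:ℂ) = (n:ℂ) := mul_left_cancel₀ h2 h3
    exact_mod_cast (congrArg Complex.re h4).symm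
  have : volume {θ : ℝ | ee θ = 1} = 0 :=
    measure_mono_null hsub ((Set.countable_range _).measure_zero volume)
  exact (MeasureTheory.ae_iff).mpr (by simpa using this)

lemma normSq_ee (θ : ℝ) : (ee θ).re^2 + (ee θ).im^2 = 1 := by
  have h := abs_ee θ
  have h2 : Complex.normSq (ee θ) = 1 := by
    rw [← Complex.sq_norm, h]; norm_num
  rw [Complex.normSq_apply] at h2
  nlinarith [h2]

lemma slit_one_sub_ee {θ : ℝ} (hθ : ee θ ≠ 1) : (1 - ee θ) ∈ Complex.slitPlane := by
  by_cases him : (ee θ).im = 0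
  · left
    have h1 := normSq_ee θ
    rw [him] at h1
    have : ((ee θ).re - 1) * ((ee θ).re + 1) = 0 := by nlinarith
    rcases mul_eq_zero.mp this with h | h
    · exfalso
      apply hθ
      apply Complex.ext
      · simpa using by linarith
      · simpa using him
    · simp only [Complex.sub_re, Complex.one_re]
      have : (ee θ).re = -1 := by linarith
      rw [this]; norm_num
  · right
    simpa using him

lemma slit_one_sub_r {r : ℝ} (h0 : 0 ≤ r) (h1 : r < 1) (θ : ℝ) :
    (1 - (r:ℂ) * ee θ) ∈ Complex.slitPlane := by
  left
  have hre : ((r:ℂ) * ee θ).re ≤ r := by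
    calc ((r:ℂ) * ee θ).re ≤ ‖(r:ℂ) * ee θ‖ := Complex.re_le_norm _
      _ = r := by
        rw [norm_mul, abs_ee, mul_one, Complex.norm_real, Real.norm_eq_abs, _root_.abs_of_nonneg h0]
  simp only [Complex.sub_re, Complex.one_re, Complex.mul_re]
  have := hre
  simp only [Complex.mul_re] at this
  linarith

lemma key_bound {r : ℝ} (hr : 1/2 ≤ r) (hr1 : r ≤ 1) {θ : ℝ} (hθ : ee θ ≠ 1) :
    ‖Complex.log (1 - (r:ℂ) * ee θ)‖ ≤ π + 2 - hh θ := by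
  set z := ee θ with hz
  set w := 1 - (r:ℂ) * z with hw
  set s := ‖1 - z‖ with hs
  have hsq := normSq_ee θ
  have hspos : 0 < s := by
    rw [hs]
    apply norm_pos_iff.mpr
    exact sub_ne_zero.mpr (Ne.symm hθ)
  have hsle : s ≤ 2 := by
    rw [hs]
    calc ‖1 - z‖ ≤ ‖(1:ℂ)‖ + ‖z‖ := by
          simpa using norm_sub_le (1:ℂ) z
      _ = 2 := by rw [abs_ee θ]; norm_num
  have hs2 : s^2 = (1 - z.re)^2 + z.im^2 := by
    rw [hs, Complex.sq_norm, Complex.normSq_apply]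
    simp [Complex.sub_re, Complex.sub_im]
    ring
  have hwsq : Complex.normSq w = (1 - r*z.re)^2 + (r*z.im)^2 := by
    rw [hw, Complex.normSq_apply]
    simp [Complex.sub_re, Complex.sub_im, Complex.mul_re, Complex.mul_im]
    ring
  have hkey : (s/2)^2 ≤ Complex.normSq w := by
    rw [hwsq]
    have h1 : (s/2)^2 = ((1 - z.re)^2 + z.im^2)/4 := by rw [← hs2]; ring
    rw [h1]
    nlinarith [sq_nonneg (1-r), sq_nonneg z.im, sq_nonneg (1 - z.re)]
  have habsw : s/2 ≤ ‖w‖ := by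
    rw [Complex.norm_def]
    rw [Real.le_sqrt (by positivity)]
    · exact hkey
    · exact Complex.normSq_nonneg w
  have habswle : ‖w‖ ≤ 2 := by
    rw [hw]
    calc ‖1 - (r:ℂ)*z‖ ≤ ‖(1:ℂ)‖ + ‖(r:ℂ)*z‖ := by
          simpa using norm_sub_le (1:ℂ) ((r:ℂ)*z)
      _ ≤ 2 := by
          rw [norm_mul, abs_ee, mul_one, Complex.norm_real, Real.norm_eq_abs, _root_.abs_of_nonneg (by linarith : (0:ℝ) ≤ r)]
          simp; linarith
  have habswpos : 0 < ‖w‖ := lt_of_lt_of_le (by positivity) habsw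
  have hlog2 : Real.log 2 ≤ 1 := by
    have := Real.log_le_sub_one_of_pos (by norm_num : (0:ℝ) < 2)
    linarith
  have hlog2pos : (0:ℝ) ≤ Real.log 2 := Real.log_nonneg one_le_two
  have hhh : hh θ = Real.log s := by rw [hh, ← hz, ← hs]
  have hub : Real.log ‖w‖ ≤ Real.log 2 := Real.log_le_log habswpos habswle
  have hlb : Real.log s - Real.log 2 ≤ Real.log ‖w‖ := by
    have := Real.log_le_log (by positivity : (0:ℝ) < s/2) habsw
    rwa [Real.log_div (ne_of_gt hspos) (by norm_num)] at this
  have hsle2 : Real.log s ≤ Real.log 2 := Real.log_le_log hspos hsle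
  have habslog : |Real.log ‖w‖| ≤ 2*Real.log 2 - Real.log s := by
    rw [abs_le]
    constructor <;> linarith
  calc ‖Complex.log w‖ ≤ |(Complex.log w).re| + |(Complex.log w).im| :=
        Complex.norm_le_abs_re_add_abs_im _
    _ ≤ (2*Real.log 2 - Real.log s) + π := by
        rw [Complex.log_re, Complex.log_im]
        exact add_le_add habslog (Complex.abs_arg_le_pi _)
    _ ≤ π + 2 - hh θ := by rw [hhh]; linarith

lemma hh_meas : Measurable hh :=
  Real.measurable_log.comp (continuous_norm.comp (continuous_const.sub cont_ee)).measurable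

lemma log01 : IntervalIntegrable Real.log volume 0 1 := by
  rw [intervalIntegrable_iff_integrableOn_Ioc_of_le zero_le_one]
  have hg : MeasureTheory.IntegrableOn (fun x : ℝ => 2 * x ^ (-(1:ℝ)/2)) (Set.Ioc 0 1) := by
    rw [← intervalIntegrable_iff_integrableOn_Ioc_of_le zero_le_one]
    exact (intervalIntegral.intervalIntegrable_rpow' (by norm_num)).const_mul 2
  apply hg.mono' Real.measurable_log.aestronglyMeasurable.restrict
  rw [MeasureTheory.ae_restrict_iff' measurableSet_Ioc]
  filter_upwards with x hx
  obtain ⟨hx0, hx1⟩ := hx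
  have hlog : Real.log x ≤ 0 := Real.log_nonpos hx0.le hx1
  rw [Real.norm_eq_abs, abs_of_nonpos hlog]
  have h2 : Real.log (x ^ (-(1:ℝ)/2)) ≤ x ^ (-(1:ℝ)/2) - 1 :=
    Real.log_le_sub_one_of_pos (Real.rpow_pos_of_pos hx0 _)
  rw [Real.log_rpow hx0] at h2
  have hpos : (0:ℝ) < x ^ (-(1:ℝ)/2) := Real.rpow_pos_of_pos hx0 _
  nlinarith

lemma abs_one_sub_ee {θ : ℝ} (h0 : 0 ≤ θ) (h1 : θ ≤ 1) :
    ‖1 - ee θ‖ = 2 * Real.sin (π * θ) := by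
  have hrw : (2 * (Real.pi : ℂ) * Complex.I * (θ : ℂ)) = ((2 * π * θ : ℝ) : ℂ) * Complex.I := by
    push_cast; ring
  rw [ee, hrw, Complex.norm_def, Complex.normSq_apply]
  simp only [Complex.sub_re, Complex.sub_im, Complex.one_re, Complex.one_im,
    Complex.exp_ofReal_mul_I_re, Complex.exp_ofReal_mul_I_im]
  have hsin : (0:ℝ) ≤ Real.sin (π * θ) :=
    Real.sin_nonneg_of_nonneg_of_le_pi (by positivity) (by nlinarith [Real.pi_pos])
  have h2 : Real.cos (2*π*θ) = Real.cos (π*θ)^2 - Real.sin (π*θ)^2 := by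
    rw [show 2*π*θ = 2*(π*θ) by ring]; exact Real.cos_two_mul' _
  have h3 : Real.sin (2*π*θ)^2 + Real.cos (2*π*θ)^2 = 1 := Real.sin_sq_add_cos_sq _
  have h4 : Real.sin (π*θ)^2 + Real.cos (π*θ)^2 = 1 := Real.sin_sq_add_cos_sq _
  have hds : (1 - Real.cos (2*π*θ)) * (1 - Real.cos (2*π*θ))
      + (0 - Real.sin (2*π*θ)) * (0 - Real.sin (2*π*θ)) = (2 * Real.sin (π*θ))^2 := by
    nlinarith [h2, h3, h4]
  rw [hds]
  exact Real.sqrt_sq (by positivity)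

lemma hh_int01 : IntervalIntegrable hh volume 0 1 := by
  rw [intervalIntegrable_iff_integrableOn_Ioc_of_le zero_le_one]
  have hG : MeasureTheory.IntegrableOn
      (fun θ : ℝ => Real.log (2*π) - Real.log θ - Real.log (1-θ)) (Set.Ioc 0 1) := by
    rw [← intervalIntegrable_iff_integrableOn_Ioc_of_le zero_le_one]
    apply IntervalIntegrable.sub
    · apply IntervalIntegrable.sub _ log01
      exact intervalIntegrable_const
    · have := (log01.comp_sub_left 1).symm
      simpa using this
  apply hG.mono' hh_meas.aestronglyMeasurable.restrict
  rw [MeasureTheory.ae_restrict_iff' measurableSet_Ioc]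
  have h1 : ∀ᵐ θ : ℝ ∂volume, θ ≠ 1 := by
    refine MeasureTheory.ae_iff.mpr ?_
    simpa using MeasureTheory.measure_singleton (1:ℝ)
  filter_upwards [h1] with θ hθ1 hθ
  obtain ⟨h0, hle1⟩ := hθ
  have hlt1 : θ < 1 := lt_of_le_of_ne hle1 hθ1
  rw [Real.norm_eq_abs, hh, abs_one_sub_ee h0.le hle1]
  have hπ := Real.pi_pos
  have hs : 0 < Real.sin (π*θ) := Real.sin_pos_of_pos_of_lt_pi (by positivity) (by nlinarith)
  have hub : Real.sin (π*θ) ≤ π*θ := Real.sin_le (by positivity)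
  have hlb : 2 * min θ (1-θ) ≤ Real.sin (π*θ) := by
    rcases le_or_gt θ (1/2) with hc | hc
    · have := Real.mul_le_sin (x := π*θ) (by positivity) (by nlinarith)
      rw [min_eq_left (by linarith)]
      calc 2*θ = 2/π * (π*θ) := by field_simp
        _ ≤ _ := this
    · have := Real.mul_le_sin (x := π*(1-θ)) (by nlinarith) (by nlinarith)
      rw [show π*(1-θ) = π - π*θ by ring, Real.sin_pi_sub] at this
      rw [min_eq_right (by linarith)]
      calc 2*(1-θ) = 2/π * (π - π*θ) := by field_simp
        _ ≤ _ := this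
  have hlogθ : Real.log θ ≤ 0 := Real.log_nonpos h0.le hle1
  have hlog1θ : Real.log (1-θ) ≤ 0 := Real.log_nonpos (by linarith) (by linarith)
  have hlog2π : (0:ℝ) < Real.log (2*π) := Real.log_pos (by nlinarith [Real.pi_gt_three])
  rw [abs_le]
  constructor
  · -- lower bound
    rcases le_or_gt θ (1/2) with hc | hc
    · have hmin : min θ (1-θ) = θ := min_eq_left (by linarith)
      have : Real.log (2*(2*θ)) ≤ Real.log (2*Real.sin (π*θ)) := by
        apply Real.log_le_log (by positivity); rw [hmin] at hlb; linarith
      rw [show 2*(2*θ) = 4*θ by ring, Real.log_mul (by norm_num) (ne_of_gt h0)] at this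
      have h4 : (0:ℝ) ≤ Real.log 4 := Real.log_nonneg (by norm_num)
      linarith
    · have hmin : min θ (1-θ) = 1-θ := min_eq_right (by linarith)
      have : Real.log (2*(2*(1-θ))) ≤ Real.log (2*Real.sin (π*θ)) := by
        apply Real.log_le_log (by nlinarith); rw [hmin] at hlb; linarith
      rw [show 2*(2*(1-θ)) = 4*(1-θ) by ring,
        Real.log_mul (by norm_num) (by linarith : (1:ℝ)-θ ≠ 0)] at this
      have h4 : (0:ℝ) ≤ Real.log 4 := Real.log_nonneg (by norm_num)
      linarith
  · -- upper bound
    have : Real.log (2*Real.sin (π*θ)) ≤ Real.log (2*π*θ) := by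
      apply Real.log_le_log (by positivity); nlinarith
    rw [show 2*π*θ = (2*π)*θ by ring,
      Real.log_mul (by positivity) (ne_of_gt h0)] at this
    linarith

lemma ee_per : Function.Periodic ee 1 := by
  intro θ
  rw [ee, ee]
  push_cast
  rw [mul_add, Complex.exp_add, mul_one, Complex.exp_two_pi_mul_I, mul_one]

lemma hh_shift (k : ℤ) (x : ℝ) : hh (x + k) = hh x := by
  rw [hh, hh]
  have : ee (x + k) = ee x := by
    rw [ee, ee]
    push_cast
    rw [mul_add, Complex.exp_add]
    rw [show 2 * (π:ℂ) * Complex.I * (k:ℂ) = (k:ℂ) * (2 * π * Complex.I) by ring,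
      Complex.exp_int_mul_two_pi_mul_I, mul_one]
  rw [this]

lemma hh_int_nat (n : ℕ) : IntervalIntegrable hh volume (-(n:ℝ)) (n:ℝ) := by
  have hstep : ∀ c : ℤ, IntervalIntegrable hh volume (-(c:ℝ)) (1 + -(c:ℝ)) := by
    intro c
    have h0 := hh_int01.comp_sub_right (-(c:ℝ))
    simp only [zero_sub, neg_neg, sub_neg_eq_add, zero_add] at h0
    have h2 : (fun x : ℝ => hh (x + (c:ℝ))) = hh := funext fun x => hh_shift c x
    rwa [h2] at h0
  induction n with
  | zero => simp
  | succ n ih =>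
    have hr := hstep (-(n:ℤ))
    push_cast at hr
    rw [neg_neg] at hr
    have hl := hstep ((n:ℤ)+1)
    push_cast at hl
    rw [show (1:ℝ) + -((n:ℝ)+1) = -(n:ℝ) by ring] at hl
    rw [show (1:ℝ) + (n:ℝ) = (n:ℝ)+1 by ring] at hr
    have := hl.trans (ih.trans hr)
    push_cast
    exact this

lemma hh_int (a b : ℝ) : IntervalIntegrable hh volume a b := by
  obtain ⟨n, hn⟩ := exists_nat_gt (max |a| |b|)
  apply (hh_int_nat n).mono_set
  rw [Set.uIcc_subset_uIcc_iff_le]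
  obtain ⟨ha1, ha2⟩ := abs_lt.mp (lt_of_le_of_lt (le_max_left |a| |b|) hn)
  obtain ⟨hb1, hb2⟩ := abs_lt.mp (lt_of_le_of_lt (le_max_right |a| |b|) hn)
  have hn0 : (0:ℝ) ≤ n := Nat.cast_nonneg n
  rw [min_eq_left (show -(n:ℝ) ≤ (n:ℝ) by linarith), max_eq_right (show -(n:ℝ) ≤ (n:ℝ) by linarith)]
  exact ⟨le_min (by linarith) (by linarith), max_le (by linarith) (by linarith)⟩

lemma li2_summable {z : ℂ} (hz : ‖z‖ ≤ 1) :
    Summable (fun n : ℕ => z ^ (n + 1) / ((n : ℂ) + 1) ^ 2) := by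
  apply Summable.of_norm
  apply summable_one_div_sq.of_nonneg_of_le (fun n => norm_nonneg _)
  intro n
  have h1 : ‖z‖ ^ (n+1) ≤ 1 := pow_le_one₀ (norm_nonneg z) hz
  have h2 : ((n:ℂ) + 1) = ((n+1:ℕ):ℂ) := by push_cast; ring
  simp only [norm_div, norm_pow, h2, Complex.norm_natCast]
  push_cast
  gcongr

lemma ee_pow (θ : ℝ) (n : ℕ) :
    ee θ ^ n = Complex.exp ((2 * (Real.pi:ℂ) * Complex.I * (n:ℂ)) * (θ:ℂ)) := by
  rw [ee, ← Complex.exp_nat_mul]; ring_nf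

lemma lemA (a : ℝ) {r : ℝ} (h0 : 0 ≤ r) (h1 : r < 1) :
    (∫ θ in (0:ℝ)..a, Complex.log (1 - (r:ℂ) * ee θ))
      = (1 / (2 * (Real.pi:ℂ) * Complex.I)) * (Li2 (r:ℂ) - Li2 ((r:ℂ) * ee a)) := by
  have habs : ∀ θ : ℝ, ‖(r:ℂ) * ee θ‖ = r := by
    intro θ
    rw [norm_mul, show ‖ee θ‖ = 1 from abs_ee θ, mul_one, Complex.norm_real,
      Real.norm_eq_abs, _root_.abs_of_nonneg h0]
  have hgeo : Summable (fun n : ℕ => r ^ (n+1)) :=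
    (summable_nat_add_iff 1).mpr (summable_geometric_of_lt_one h0 h1)
  -- Step 1: HasSum of integrals
  have step1 : HasSum (fun n : ℕ => ∫ θ in (0:ℝ)..a, -(((r:ℂ) * ee θ)^(n+1) / ((n:ℂ)+1)))
      (∫ θ in (0:ℝ)..a, Complex.log (1 - (r:ℂ) * ee θ)) := by
    apply intervalIntegral.hasSum_integral_of_dominated_convergence
      (bound := fun (n : ℕ) (_ : ℝ) => r^(n+1) / ((n:ℝ)+1))
    · intro n
      apply Continuous.aestronglyMeasurable
      exact (((continuous_const.mul cont_ee).pow (n+1)).div_const _).neg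
    · intro n
      filter_upwards with θ _
      rw [norm_neg, norm_div, norm_pow, norm_natsucc, habs θ]
    · filter_upwards with θ _
      apply Summable.of_nonneg_of_le (fun n => by positivity) (fun n => ?_) hgeo
      apply div_le_self (by positivity)
      have : (0:ℝ) ≤ (n:ℝ) := Nat.cast_nonneg n
      linarith
    · exact intervalIntegrable_const
    · filter_upwards with θ _
      set z := (r:ℂ) * ee θ with hzdef
      have hz : ‖z‖ < 1 := by rw [habs θ]; exact h1
      have H : HasSum (fun n : ℕ => z^n / (n:ℂ)) (-Complex.log (1-z)) :=
        Complex.hasSum_taylorSeries_neg_log hz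
      have H2 : HasSum (fun n : ℕ => z^(n+1) / ((n+1:ℕ):ℂ)) (-Complex.log (1-z)) := by
        apply (hasSum_nat_add_iff (f := fun n : ℕ => z^n / (n:ℂ)) 1).mpr
        simpa using H
      have H3 := H2.neg
      rw [neg_neg] at H3
      have hfe : (fun n : ℕ => -(z^(n+1) / ((n+1:ℕ):ℂ))) = fun n : ℕ => -(z^(n+1) / ((n:ℂ)+1)) := by
        funext n; push_cast; ring
      rwa [hfe] at H3
  -- Step 2: compute each integral
  have step2 : ∀ n : ℕ, (∫ θ in (0:ℝ)..a, -(((r:ℂ) * ee θ)^(n+1) / ((n:ℂ)+1)))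
      = (1 / (2 * (Real.pi:ℂ) * Complex.I)) *
        ((r:ℂ)^(n+1) / ((n:ℂ)+1)^2 - ((r:ℂ) * ee a)^(n+1) / ((n:ℂ)+1)^2) := by
    intro n
    have hne : ((n:ℂ)+1) ≠ 0 := by
      intro h
      have := norm_natsucc n
      rw [h] at this
      simp at this
      have : (0:ℝ) ≤ (n:ℝ) := Nat.cast_nonneg n
      linarith
    have hπ : (Real.pi:ℂ) ≠ 0 := Complex.ofReal_ne_zero.mpr Real.pi_ne_zero
    have hc : (2 * (Real.pi:ℂ) * Complex.I * ((n:ℂ)+1)) ≠ 0 := by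
      apply mul_ne_zero (mul_ne_zero (mul_ne_zero two_ne_zero hπ) Complex.I_ne_zero) hne
    have heq : (fun θ : ℝ => -(((r:ℂ) * ee θ)^(n+1) / ((n:ℂ)+1)))
        = fun θ : ℝ => (-(r:ℂ)^(n+1) / ((n:ℂ)+1)) *
            Complex.exp ((2 * (Real.pi:ℂ) * Complex.I * ((n:ℂ)+1)) * (θ:ℂ)) := by
      funext θ
      rw [mul_pow, ee_pow θ (n+1)]
      push_cast
      ring
    rw [heq, intervalIntegral.integral_const_mul,
      integral_exp_mul_complex hc]
    have hea : Complex.exp ((2 * (Real.pi:ℂ) * Complex.I * ((n:ℂ)+1)) * (a:ℂ)) = ee a ^ (n+1) := by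
      rw [ee_pow a (n+1)]; push_cast; ring_nf
    rw [hea]
    rw [show ((0:ℝ):ℂ) = (0:ℂ) by norm_num, mul_zero, Complex.exp_zero]
    field_simp
    ring
  -- Step 3
  have hra : ‖(r:ℂ)‖ ≤ 1 := by
    rw [Complex.norm_real, Real.norm_eq_abs, _root_.abs_of_nonneg h0]; exact h1.le
  have hrea : ‖(r:ℂ) * ee a‖ ≤ 1 := by rw [habs a]; exact h1.le
  have hs1 : HasSum (fun n : ℕ => (r:ℂ)^(n+1) / ((n:ℂ)+1)^2) (Li2 (r:ℂ)) :=
    (li2_summable hra).hasSum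
  have hs2 : HasSum (fun n : ℕ => ((r:ℂ) * ee a)^(n+1) / ((n:ℂ)+1)^2) (Li2 ((r:ℂ) * ee a)) :=
    (li2_summable hrea).hasSum
  have hs3 := (hs1.sub hs2).mul_left (1 / (2 * (Real.pi:ℂ) * Complex.I))
  have hfe2 : (fun n : ℕ => ∫ θ in (0:ℝ)..a, -(((r:ℂ) * ee θ)^(n+1) / ((n:ℂ)+1)))
      = fun n : ℕ => (1 / (2 * (Real.pi:ℂ) * Complex.I)) *
        ((r:ℂ)^(n+1) / ((n:ℂ)+1)^2 - ((r:ℂ) * ee a)^(n+1) / ((n:ℂ)+1)^2) := funext step2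
  rw [hfe2] at step1
  exact step1.unique hs3


/-- The integral of `Log(1 - e^{2πiθ})` from `0` to `a` equals
`(1/(2πi)) (π²/6 - Li₂(e^{2πia}))`. -/
theorem integral_log_one_sub_exp (a : ℝ) :
    (∫ θ : ℝ in (0:ℝ)..a,
        Complex.log (1 - Complex.exp (2 * (Real.pi : ℂ) * Complex.I * (θ : ℂ))))
      = (1 / (2 * (Real.pi : ℂ) * Complex.I)) *
          ((Real.pi : ℂ) ^ 2 / 6 - Li2 (Complex.exp (2 * (Real.pi : ℂ) * Complex.I * (a : ℂ)))) := by
  show (∫ θ : ℝ in (0:ℝ)..a, Complex.log (1 - ee θ))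
      = (1 / (2 * (Real.pi : ℂ) * Complex.I)) * ((Real.pi : ℂ) ^ 2 / 6 - Li2 (ee a))
  set l := nhdsWithin (1:ℝ) (Set.Iio 1) with hl
  have hev : Set.Ioo (1/2:ℝ) 1 ∈ l :=
    Ioo_mem_nhdsLT_of_mem (by norm_num : (1:ℝ) ∈ Set.Ioc (1/2) 1)
  -- LHS limit
  have hT1 : Tendsto (fun r : ℝ => ∫ θ in (0:ℝ)..a, Complex.log (1 - (r:ℂ) * ee θ)) l
      (nhds (∫ θ : ℝ in (0:ℝ)..a, Complex.log (1 - ee θ))) := by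
    apply intervalIntegral.tendsto_integral_filter_of_dominated_convergence
      (bound := fun θ => π + 2 - hh θ)
    · filter_upwards [hev] with r hr
      apply Continuous.aestronglyMeasurable
      rw [continuous_iff_continuousAt]
      intro θ
      exact ContinuousAt.clog
        ((continuous_const.sub (continuous_const.mul cont_ee)).continuousAt)
        (slit_one_sub_r (by linarith [hr.1]) hr.2 θ)
    · filter_upwards [hev] with r hr
      filter_upwards [ae_ne_one] with θ hθ _
      exact key_bound hr.1.le hr.2.le hθ
    · exact intervalIntegrable_const.sub (hh_int 0 a)
    · filter_upwards [ae_ne_one] with θ hθ _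
      have hcont : ContinuousAt Complex.log (1 - ee θ) :=
        continuousAt_clog (slit_one_sub_ee hθ)
      have hc2 : Tendsto (fun r : ℝ => 1 - (r:ℂ) * ee θ) l (nhds (1 - ee θ)) := by
        have : Continuous (fun r : ℝ => 1 - (r:ℂ) * ee θ) :=
          continuous_const.sub (Complex.continuous_ofReal.mul continuous_const)
        refine Tendsto.mono_left ?_ nhdsWithin_le_nhds
        simpa using this.tendsto 1
      exact hcont.tendsto.comp hc2
  -- RHS limit
  have hT2 : Tendsto (fun r : ℝ => (1 / (2 * (Real.pi:ℂ) * Complex.I)) *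
      (Li2 (r:ℂ) - Li2 ((r:ℂ) * ee a))) l
      (nhds ((1 / (2 * (Real.pi : ℂ) * Complex.I)) * ((Real.pi : ℂ) ^ 2 / 6 - Li2 (ee a)))) := by
    apply Tendsto.const_mul
    rw [← li2_one]
    apply Tendsto.sub
    · have := li2_radial (z := 1) (by norm_num)
      simpa using this
    · exact li2_radial (z := ee a) (by rw [show ‖ee a‖ = 1 from abs_ee a])
  -- eventual equality
  have heq : (fun r : ℝ => ∫ θ in (0:ℝ)..a, Complex.log (1 - (r:ℂ) * ee θ))
      =ᶠ[l] fun r : ℝ => (1 / (2 * (Real.pi:ℂ) * Complex.I)) * (Li2 (r:ℂ) - Li2 ((r:ℂ) * ee a)) := by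
    filter_upwards [hev] with r hr
    exact lemA a (by linarith [hr.1]) hr.2
  have hT1' := hT1.congr' heq
  exact tendsto_nhds_unique hT1' hT2
end

section
/- Let a and x be complex numbers with x ≠ 0, x not a nonpositive real, |e^{2πia}·x| < 1 and |e^{2πia}/x| < 1. Define Φ(a,·) on a neighborhood of x by Φ(a,z) = −2πia·Log z − Li₂(e^{2πia}z) + Li₂(e^{2πia}z^{−1}), where Log is the principal complex logarithm. Then Φ(a,·) has a complex derivative D at x, and exp(x·D) = e^{2πia} + e^{−2πia} − x − x^{−1}. -/
open Complex Real

lemma Li2_hasDerivAt {z : ℂ} (hz : ‖z‖ < 1) (hz0 : z ≠ 0) :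
    HasDerivAt Li2 (-Complex.log (1 - z) / z) z := by
  set r : ℝ := (‖z‖ + 1) / 2 with hr
  have hzr : ‖z‖ < r := by
    have := norm_nonneg z
    simp only [hr]; linarith
  have hr1 : r < 1 := by simp only [hr]; linarith
  have hr0 : (0 : ℝ) ≤ r := le_trans (norm_nonneg z) hzr.le
  have key : HasDerivAt Li2 (∑' n : ℕ, z ^ n / ((n : ℂ) + 1)) z := by
    refine hasDerivAt_tsum_of_isPreconnected (u := fun n : ℕ => r ^ n)
      (g := fun n y => y ^ (n + 1) / ((n : ℂ) + 1) ^ 2)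
      (g' := fun n y => y ^ n / ((n : ℂ) + 1))
      (summable_geometric_of_lt_one hr0 hr1)
      (Metric.isOpen_ball (x := (0 : ℂ)) (ε := r))
      ((convex_ball (0 : ℂ) r).isPreconnected)
      (fun n y _ => ?_) (fun n y hy => ?_)
      (Metric.mem_ball_self (lt_of_le_of_lt (norm_nonneg z) hzr))
      (?_) (by simpa [Metric.mem_ball, Complex.dist_eq] using hzr)
    · have hcast : ((n : ℂ) + 1) ≠ 0 := Nat.cast_add_one_ne_zero n
      have h := (hasDerivAt_pow (n + 1) y).div_const (((n : ℂ) + 1) ^ 2)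
      refine h.congr_deriv ?_
      push_cast [Nat.add_sub_cancel]
      rw [div_eq_div_iff (pow_ne_zero 2 hcast) hcast]
      ring
    · have hy' : ‖y‖ < r := by
        simpa [Metric.mem_ball, Complex.dist_eq] using hy
      have h1 : ‖y ^ n / ((n : ℂ) + 1)‖ ≤ ‖y ^ n‖ := by
        rw [norm_div]
        have : (1 : ℝ) ≤ ‖((n : ℂ) + 1)‖ := by
          have : ((n : ℂ) + 1) = ((n + 1 : ℕ) : ℂ) := by push_cast; ring
          rw [this, Complex.norm_natCast]
          exact_mod_cast Nat.one_le_iff_ne_zero.mpr (Nat.succ_ne_zero n)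
        calc ‖y ^ n‖ / ‖((n : ℂ) + 1)‖ ≤ ‖y ^ n‖ / 1 := by
              apply div_le_div_of_nonneg_left (norm_nonneg _) one_pos this
          _ = ‖y ^ n‖ := div_one _
      refine h1.trans ?_
      rw [norm_pow]
      exact pow_le_pow_left₀ (norm_nonneg _) hy'.le n
    · convert summable_zero with n
      simp [pow_succ]
  have hsum : (∑' n : ℕ, z ^ n / ((n : ℂ) + 1)) = -Complex.log (1 - z) / z := by
    have h := Complex.hasSum_taylorSeries_neg_log (z := z) (by simpa using hz)
    have h0 : HasSum (fun n : ℕ => z ^ n / (n : ℂ))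
        (-Complex.log (1 - z) + ∑ i ∈ Finset.range 1, z ^ i / (i : ℂ)) := by
      simpa using h
    have h1 : HasSum (fun n : ℕ => z ^ (n + 1) / ((n : ℂ) + 1))
        (-Complex.log (1 - z)) := by
      have heq : (fun n : ℕ => z ^ (n + 1) / ((n : ℂ) + 1))
          = fun n : ℕ => z ^ (n + 1) / ((n + 1 : ℕ) : ℂ) := by
        funext n; push_cast; ring
      rw [heq]
      exact (hasSum_nat_add_iff (f := fun n : ℕ => z ^ n / (n : ℂ)) 1).mpr h0
    have h2 : HasSum (fun n : ℕ => z ^ n / ((n : ℂ) + 1))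
        (-Complex.log (1 - z) / z) := by
      have heq2 : (fun n : ℕ => z ^ n / ((n : ℂ) + 1))
          = fun n : ℕ => z ^ (n + 1) / ((n : ℂ) + 1) / z := by
        funext n
        have hcast : ((n : ℂ) + 1) ≠ 0 := Nat.cast_add_one_ne_zero n
        rw [pow_succ]
        field_simp
      rw [heq2]
      exact h1.div_const z
    exact h2.tsum_eq
  rw [← hsum]
  exact key

/-- The derivative of the figure-eight potential function
`Φ(a,z) = -2πia Log z - Li₂(e^{2πia} z) + Li₂(e^{2πia} z⁻¹)` satisfies
`exp (x ∂Φ/∂x) = e^{2πia} + e^{-2πia} - x - x⁻¹`. -/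
theorem figure_eight_potential_deriv (a x : ℂ) (hx : x ≠ 0)
    (hslit : ¬ (x.im = 0 ∧ x.re ≤ 0))
    (h1 : ‖Complex.exp (2 * (Real.pi : ℂ) * Complex.I * a) * x‖ < 1)
    (h2 : ‖Complex.exp (2 * (Real.pi : ℂ) * Complex.I * a) / x‖ < 1) :
    ∃ D : ℂ,
      HasDerivAt (fun z : ℂ =>
          -(2 * (Real.pi : ℂ) * Complex.I * a) * Complex.log z
            - Li2 (Complex.exp (2 * (Real.pi : ℂ) * Complex.I * a) * z)
            + Li2 (Complex.exp (2 * (Real.pi : ℂ) * Complex.I * a) * z⁻¹)) D x ∧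
      Complex.exp (x * D)
        = Complex.exp (2 * (Real.pi : ℂ) * Complex.I * a)
            + Complex.exp (-(2 * (Real.pi : ℂ) * Complex.I * a)) - x - x⁻¹ := by
  set c : ℂ := 2 * (Real.pi : ℂ) * Complex.I * a with hc
  set q : ℂ := Complex.exp c with hq
  have hq0 : q ≠ 0 := Complex.exp_ne_zero c
  have hqx0 : q * x ≠ 0 := mul_ne_zero hq0 hx
  have hqxi0 : q * x⁻¹ ≠ 0 := mul_ne_zero hq0 (inv_ne_zero hx)
  have h2' : ‖q * x⁻¹‖ < 1 := by rwa [← div_eq_mul_inv]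
  -- log derivative
  have hlog : HasDerivAt Complex.log x⁻¹ x := by
    apply Complex.hasDerivAt_log
    rw [Complex.mem_slitPlane_iff]
    by_contra h
    push_neg at h
    exact hslit ⟨h.2, h.1⟩
  have hA : HasDerivAt (fun z : ℂ => -c * Complex.log z) (-c * x⁻¹) x :=
    hlog.const_mul (-c)
  -- Li2 (q z)
  have hinner1 : HasDerivAt (fun z : ℂ => q * z) q x := by
    simpa using (hasDerivAt_id x).const_mul q
  have hB : HasDerivAt (fun z : ℂ => Li2 (q * z))
      (-Complex.log (1 - q * x) / (q * x) * q) x :=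
    (Li2_hasDerivAt h1 hqx0).comp x hinner1
  -- Li2 (q z⁻¹)
  have hinner2 : HasDerivAt (fun z : ℂ => q * z⁻¹) (q * (-(x ^ 2)⁻¹)) x :=
    (hasDerivAt_inv hx).const_mul q
  have hC : HasDerivAt (fun z : ℂ => Li2 (q * z⁻¹))
      (-Complex.log (1 - q * x⁻¹) / (q * x⁻¹) * (q * (-(x ^ 2)⁻¹))) x :=
    HasDerivAt.comp (h₂ := Li2) x (Li2_hasDerivAt h2' hqxi0) hinner2
  refine ⟨_, (hA.sub hB).add hC, ?_⟩
  -- nonvanishing of the log arguments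
  have hne1 : 1 - q * x ≠ 0 := by
    intro h
    have : q * x = 1 := by linear_combination -h
    rw [this] at h1
    simp at h1
  have hne2 : 1 - q * x⁻¹ ≠ 0 := by
    intro h
    have : q * x⁻¹ = 1 := by linear_combination -h
    rw [this] at h2'
    simp at h2'
  have hxD : x * (-c * x⁻¹ - -Complex.log (1 - q * x) / (q * x) * q
      + -Complex.log (1 - q * x⁻¹) / (q * x⁻¹) * (q * (-(x ^ 2)⁻¹)))
      = -c + Complex.log (1 - q * x) + Complex.log (1 - q * x⁻¹) := by
    field_simp
    ring
  rw [hxD, Complex.exp_add, Complex.exp_add, Complex.exp_log hne1,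
    Complex.exp_log hne2, Complex.exp_neg, ← hq]
  field_simp
  ring
end

section
/- Let θ and φ be real numbers with cos θ − cos φ = 1/2. Then sin((φ+θ)/2) and sin((φ−θ)/2) are both nonzero, and setting f = sin((φ+θ)/2)/sin((φ−θ)/2), one has (f + f^{−1})/2 = 1 + cos θ − cos 2θ. -/
open Real

/-- The key trigonometric identity of the figure-eight knot example: if
`cos θ - cos φ = 1/2`, then for `f = sin((φ+θ)/2) / sin((φ-θ)/2)` one has
`(f + f⁻¹)/2 = 1 + cos θ - cos 2θ`. -/
theorem figure_eight_cosh_identity (θ φ : ℝ) (h : Real.cos θ - Real.cos φ = 1/2) :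
    Real.sin ((φ + θ) / 2) ≠ 0 ∧ Real.sin ((φ - θ) / 2) ≠ 0 ∧
    (let f : ℝ := Real.sin ((φ + θ) / 2) / Real.sin ((φ - θ) / 2)
     (f + f⁻¹) / 2 = 1 + Real.cos θ - Real.cos (2 * θ)) := by
  set s1 := Real.sin ((φ + θ) / 2) with hs1
  set s2 := Real.sin ((φ - θ) / 2) with hs2
  have hcc := Real.cos_sub_cos θ φ
  have hneg : Real.sin ((θ - φ) / 2) = -s2 := by
    rw [hs2, ← Real.sin_neg]; ring_nf
  have hcomm : Real.sin ((θ + φ) / 2) = s1 := by rw [hs1]; ring_nf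
  have hprod : s1 * s2 = 1/4 := by
    rw [h, hneg, hcomm] at hcc; linarith
  have h1 : s1 ≠ 0 := by
    intro h0; rw [h0, zero_mul] at hprod; norm_num at hprod
  have h2 : s2 ≠ 0 := by
    intro h0; rw [h0, mul_zero] at hprod; norm_num at hprod
  refine ⟨h1, h2, ?_⟩
  show (s1 / s2 + (s1 / s2)⁻¹) / 2 = 1 + Real.cos θ - Real.cos (2 * θ)
  have hca : Real.cos (φ + θ) = 1 - 2 * s1 ^ 2 := by
    have hc := Real.cos_two_mul' ((φ + θ) / 2)
    have hp := Real.sin_sq_add_cos_sq ((φ + θ) / 2)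
    rw [show 2 * ((φ + θ) / 2) = φ + θ by ring] at hc
    rw [← hs1] at hc hp; linarith
  have hcb : Real.cos (φ - θ) = 1 - 2 * s2 ^ 2 := by
    have hc := Real.cos_two_mul' ((φ - θ) / 2)
    have hp := Real.sin_sq_add_cos_sq ((φ - θ) / 2)
    rw [show 2 * ((φ - θ) / 2) = φ - θ by ring] at hc
    rw [← hs2] at hc hp; linarith
  have hadd : Real.cos (φ + θ) = Real.cos φ * Real.cos θ - Real.sin φ * Real.sin θ :=
    Real.cos_add φ θ
  have hsub : Real.cos (φ - θ) = Real.cos φ * Real.cos θ + Real.sin φ * Real.sin θ :=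
    Real.cos_sub φ θ
  have h2t : Real.cos (2 * θ) = 2 * Real.cos θ ^ 2 - 1 := Real.cos_two_mul θ
  have hcphi : Real.cos φ * Real.cos θ = Real.cos θ ^ 2 - Real.cos θ / 2 := by
    have : Real.cos φ = Real.cos θ - 1/2 := by linarith
    rw [this]; ring
  rw [inv_div, div_add_div _ _ h2 h1]
  field_simp
  nlinarith [hprod, hca, hcb, hadd, hsub, h2t, hcphi]
end

section
/- Let b ∈ ℂ and let w₁, w₂, w₃, w₄ be nonzero complex numbers such that w₁w₃/(w₂w₄) is not a nonpositive real, and let U ⊆ ℂ be an open set of complex numbers a such that |e_a·w₄/w₃| < 1 and |e_a·w₁/w₂| < 1 for all a ∈ U, where e_a = e^{πia}, e_b = e^{πib}, and such that |e_b·w₄/w₁| ≤ 1 and |e_b·w₃/w₂| ≤ 1 and |w₂w₄/(w₁w₃)| ≤ 1. Define Φ⁺ on U by Φ⁺(a) = (πi(a+b)/2)·Log(w₁w₃/(w₂w₄)) − Log(w₂/w₁)·Log(w₃/w₂) − Li₂(e_a·w₄/w₃) − Li₂(e_b·w₄/w₁) + Li₂(w₂w₄/(w₁w₃)) + Li₂(e_a·w₁/w₂)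 + Li₂(e_b·w₃/w₂) − π²/6. Then Φ⁺ has a complex derivative D_a at each a ∈ U, and exp((2/(πi))·D_a) = (1 − e_a·w₄/w₃)(1 − e_a^{−1}·w₃/w₄)·(1 − e_a·w₁/w₂)^{−1}(1 − e_a^{−1}·w₂/w₁)^{−1} (the inverted factors are nonzero since |e_a·w₁/w₂| < 1 and |e_a^{−1}·w₂/w₁| > 1). -/
open Complex Real

lemma hasDerivAt_Li2 {z : ℂ} (hz : ‖z‖ < 1) :
    HasDerivAt Li2 (∑' n : ℕ, z ^ n / ((n : ℂ) + 1)) z := by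
  set r : ℝ := (1 + ‖z‖) / 2 with hr
  have hz0 : (0 : ℝ) ≤ ‖z‖ := norm_nonneg _
  have hr0 : (0 : ℝ) < r := by positivity
  have hr1 : r < 1 := by simp only [hr]; linarith
  have hzr : ‖z‖ < r := by simp only [hr]; linarith
  have key := hasDerivAt_tsum_of_isPreconnected
    (u := fun n : ℕ => r ^ n) (t := Metric.ball (0 : ℂ) r) (y₀ := (0 : ℂ))
    (g := fun (n : ℕ) (y : ℂ) => y ^ (n + 1) / ((n : ℂ) + 1) ^ 2)
    (g' := fun (n : ℕ) (y : ℂ) => y ^ n / ((n : ℂ) + 1))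
    (summable_geometric_of_lt_one hr0.le hr1) Metric.isOpen_ball
    ((convex_ball _ _).isPreconnected)
    (fun n y _ => by
      have h := (hasDerivAt_pow (n + 1) y).div_const (((n : ℂ) + 1) ^ 2)
      have hne : ((n : ℂ) + 1) ≠ 0 := Nat.cast_add_one_ne_zero n
      convert h using 1
      push_cast
      rfl
      simp only [Nat.add_sub_cancel]
      push_cast
      rw [div_eq_div_iff hne (pow_ne_zero 2 hne)]
      ring)
    (fun n y hy => by
      have hyy : ‖y‖ < r := by simpa using hy
      have h1 : (1 : ℝ) ≤ ‖((n : ℂ) + 1)‖ := by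
        have : ((n : ℂ) + 1) = ((n + 1 : ℕ) : ℂ) := by push_cast; ring
        rw [this, Complex.norm_natCast]
        exact_mod_cast Nat.one_le_iff_ne_zero.mpr (Nat.succ_ne_zero n)
      calc ‖y ^ n / ((n : ℂ) + 1)‖ = ‖y‖ ^ n / ‖((n : ℂ) + 1)‖ := by
            rw [norm_div, norm_pow]
        _ ≤ ‖y‖ ^ n / 1 := by
            apply div_le_div_of_nonneg_left (by positivity) one_pos h1
        _ = ‖y‖ ^ n := div_one _
        _ ≤ r ^ n := pow_le_pow_left₀ (norm_nonneg _) hyy.le n)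
    (Metric.mem_ball_self hr0)
    (by
      have : (fun n : ℕ => (0 : ℂ) ^ (n + 1) / ((n : ℂ) + 1) ^ 2) = fun _ => 0 := by
        funext n; simp
      rw [this]; exact summable_zero)
    (by simpa using hzr)
  exact key

lemma mul_tsum_Li2' {z : ℂ} (hz : ‖z‖ < 1) :
    z * (∑' n : ℕ, z ^ n / ((n : ℂ) + 1)) = -Complex.log (1 - z) := by
  have h := Complex.hasSum_taylorSeries_neg_log hz
  have h2 : HasSum (fun n : ℕ => z ^ (n + 1) / (((n + 1 : ℕ) : ℂ)))
      (-Complex.log (1 - z)) := by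
    have := (hasSum_nat_add_iff' (f := fun n : ℕ => z ^ n / (n : ℂ)) 1).mpr h
    simpa using this
  have h3 : HasSum (fun n : ℕ => z ^ (n + 1) / ((n : ℂ) + 1))
      (-Complex.log (1 - z)) := by
    convert h2 using 2 with n
    push_cast
    ring
  rw [← h3.tsum_eq, ← tsum_mul_left]
  exact tsum_congr fun n => by ring

lemma hasDerivAt_Li2_comp (w v a : ℂ)
    (h : ‖Complex.exp ((Real.pi : ℂ) * Complex.I * a) * w / v‖ < 1) :
    HasDerivAt (fun α : ℂ => Li2 (Complex.exp ((Real.pi : ℂ) * Complex.I * α) * w / v))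
      (-((Real.pi : ℂ) * Complex.I) *
        Complex.log (1 - Complex.exp ((Real.pi : ℂ) * Complex.I * a) * w / v)) a := by
  set x : ℂ := Complex.exp ((Real.pi : ℂ) * Complex.I * a) * w / v with hxdef
  have h1 : HasDerivAt (fun α : ℂ => (Real.pi : ℂ) * Complex.I * α)
      ((Real.pi : ℂ) * Complex.I) a := by
    simpa using (hasDerivAt_id a).const_mul ((Real.pi : ℂ) * Complex.I)
  have hf : HasDerivAt (fun α : ℂ => Complex.exp ((Real.pi : ℂ) * Complex.I * α) * w / v)
      (Complex.exp ((Real.pi : ℂ) * Complex.I * a) * ((Real.pi : ℂ) * Complex.I) * w / v) a :=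
    (h1.cexp.mul_const w).div_const v
  have hcomp := (hasDerivAt_Li2 h).comp a hf
  have heq : (∑' n : ℕ, x ^ n / ((n : ℂ) + 1)) *
      (Complex.exp ((Real.pi : ℂ) * Complex.I * a) * ((Real.pi : ℂ) * Complex.I) * w / v)
      = -((Real.pi : ℂ) * Complex.I) * Complex.log (1 - x) := by
    have : (∑' n : ℕ, x ^ n / ((n : ℂ) + 1)) *
        (Complex.exp ((Real.pi : ℂ) * Complex.I * a) * ((Real.pi : ℂ) * Complex.I) * w / v)
        = ((Real.pi : ℂ) * Complex.I) * (x * ∑' n : ℕ, x ^ n / ((n : ℂ) + 1)) := by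
      rw [hxdef]; ring
    rw [this, mul_tsum_Li2' h]
    ring
  rw [← heq]
  exact hcomp

/-- The derivative of the positive-crossing potential function `Φ⁺_c` with respect to the
color parameter `a`:  `exp ((2/(πi)) ∂Φ⁺/∂a)
  = (1 - e_a w₄/w₃)(1 - e_a⁻¹ w₃/w₄)(1 - e_a w₁/w₂)⁻¹(1 - e_a⁻¹ w₂/w₁)⁻¹`. -/
theorem positive_crossing_color_deriv (b : ℂ) (w₁ w₂ w₃ w₄ : ℂ)
    (h₁ : w₁ ≠ 0) (h₂ : w₂ ≠ 0) (h₃ : w₃ ≠ 0) (h₄ : w₄ ≠ 0)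
    (hslit : ¬ ((w₁ * w₃ / (w₂ * w₄)).im = 0 ∧ (w₁ * w₃ / (w₂ * w₄)).re ≤ 0))
    (U : Set ℂ) (hU : IsOpen U)
    (hUa : ∀ a ∈ U,
      ‖Complex.exp ((Real.pi : ℂ) * Complex.I * a) * w₄ / w₃‖ < 1 ∧
      ‖Complex.exp ((Real.pi : ℂ) * Complex.I * a) * w₁ / w₂‖ < 1)
    (hb1 : ‖Complex.exp ((Real.pi : ℂ) * Complex.I * b) * w₄ / w₁‖ ≤ 1)
    (hb2 : ‖Complex.exp ((Real.pi : ℂ) * Complex.I * b) * w₃ / w₂‖ ≤ 1)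
    (hw : ‖w₂ * w₄ / (w₁ * w₃)‖ ≤ 1) :
    ∀ a ∈ U, ∃ D : ℂ,
      HasDerivAt (fun α : ℂ =>
          ((Real.pi : ℂ) * Complex.I * (α + b) / 2) * Complex.log (w₁ * w₃ / (w₂ * w₄))
            - Complex.log (w₂ / w₁) * Complex.log (w₃ / w₂)
            - Li2 (Complex.exp ((Real.pi : ℂ) * Complex.I * α) * w₄ / w₃)
            - Li2 (Complex.exp ((Real.pi : ℂ) * Complex.I * b) * w₄ / w₁)
            + Li2 (w₂ * w₄ / (w₁ * w₃))
            + Li2 (Complex.exp ((Real.pi : ℂ) * Complex.I * α) * w₁ / w₂)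
            + Li2 (Complex.exp ((Real.pi : ℂ) * Complex.I * b) * w₃ / w₂)
            - (Real.pi : ℂ) ^ 2 / 6) D a ∧
      Complex.exp ((2 / ((Real.pi : ℂ) * Complex.I)) * D)
        = (1 - Complex.exp ((Real.pi : ℂ) * Complex.I * a) * w₄ / w₃)
            * (1 - (Complex.exp ((Real.pi : ℂ) * Complex.I * a))⁻¹ * w₃ / w₄)
            * (1 - Complex.exp ((Real.pi : ℂ) * Complex.I * a) * w₁ / w₂)⁻¹
            * (1 - (Complex.exp ((Real.pi : ℂ) * Complex.I * a))⁻¹ * w₂ / w₁)⁻¹ := by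
  intro a ha
  obtain ⟨hx, hy⟩ := hUa a ha
  set e : ℂ := Complex.exp ((Real.pi : ℂ) * Complex.I * a) with hedef
  set L : ℂ := Complex.log (w₁ * w₃ / (w₂ * w₄)) with hLdef
  set x : ℂ := e * w₄ / w₃ with hxdef
  set y : ℂ := e * w₁ / w₂ with hydef
  have hxn : ‖x‖ < 1 := by exact hx
  have hyn : ‖y‖ < 1 := by exact hy
  -- derivative of the linear term
  have hA : HasDerivAt (fun α : ℂ =>
      ((Real.pi : ℂ) * Complex.I * (α + b) / 2) * L)
      ((Real.pi : ℂ) * Complex.I * 1 / 2 * L) a :=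
    ((((hasDerivAt_id a).add_const b).const_mul ((Real.pi : ℂ) * Complex.I)).div_const 2).mul_const L
  have hLx := hasDerivAt_Li2_comp w₄ w₃ a hxn
  have hLy := hasDerivAt_Li2_comp w₁ w₂ a hyn
  have hΦ := ((((((hA.sub_const (Complex.log (w₂ / w₁) * Complex.log (w₃ / w₂))).sub
      hLx).sub_const (Li2 (Complex.exp ((Real.pi : ℂ) * Complex.I * b) * w₄ / w₁))).add_const
      (Li2 (w₂ * w₄ / (w₁ * w₃)))).add hLy).add_const
      (Li2 (Complex.exp ((Real.pi : ℂ) * Complex.I * b) * w₃ / w₂))).sub_const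
      ((Real.pi : ℂ) ^ 2 / 6)
  refine ⟨_, hΦ, ?_⟩
  -- now the exponential identity
  have hπ : (Real.pi : ℂ) ≠ 0 := by exact_mod_cast Real.pi_ne_zero
  have hπI : (Real.pi : ℂ) * Complex.I ≠ 0 := mul_ne_zero hπ Complex.I_ne_zero
  have hxne : (1 : ℂ) - x ≠ 0 := by
    intro h0
    have : x = 1 := by linear_combination -h0
    rw [this] at hxn; simp at hxn
  have hyne : (1 : ℂ) - y ≠ 0 := by
    intro h0
    have : y = 1 := by linear_combination -h0
    rw [this] at hyn; simp at hyn
  have he : e ≠ 0 := Complex.exp_ne_zero _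
  have harg : (2 / ((Real.pi : ℂ) * Complex.I)) *
      (((Real.pi : ℂ) * Complex.I * 1 / 2 * L - -((Real.pi : ℂ) * Complex.I) *
        Complex.log (1 - x)) + -((Real.pi : ℂ) * Complex.I) * Complex.log (1 - y))
      = L + (Complex.log (1 - x) + Complex.log (1 - x))
          - (Complex.log (1 - y) + Complex.log (1 - y)) := by
    field_simp
    ring
  have eL : Complex.exp L = w₁ * w₃ / (w₂ * w₄) :=
    Complex.exp_log (div_ne_zero (mul_ne_zero h₁ h₃) (mul_ne_zero h₂ h₄))
  have ex : Complex.exp (Complex.log (1 - x)) = 1 - x := Complex.exp_log hxne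
  have ey : Complex.exp (Complex.log (1 - y)) = 1 - y := Complex.exp_log hyne
  rw [harg, Complex.exp_sub, Complex.exp_add, Complex.exp_add, Complex.exp_add, eL, ex, ey]
  have hy2 : (1 : ℂ) - e⁻¹ * w₂ / w₁ ≠ 0 := by
    have hfac : (1 : ℂ) - e⁻¹ * w₂ / w₁ = -(e⁻¹ * w₂ / w₁) * (1 - y) := by
      rw [hydef]; field_simp; ring
    rw [hfac]
    exact mul_ne_zero (neg_ne_zero.mpr (div_ne_zero (mul_ne_zero (inv_ne_zero he) h₂) h₁)) hyne
  have f1 : (1 : ℂ) - e⁻¹ * w₃ / w₄ = -(e⁻¹ * w₃ / w₄) * (1 - e * w₄ / w₃) := by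
    field_simp
    ring
  have f2 : (1 : ℂ) - e⁻¹ * w₂ / w₁ = -(e⁻¹ * w₂ / w₁) * (1 - e * w₁ / w₂) := by
    field_simp
    ring
  rw [f1, f2]
  generalize hp : (1 : ℂ) - e * w₄ / w₃ = p at *
  generalize hq : (1 : ℂ) - e * w₁ / w₂ = q at *
  field_simp
end

section
/- Let a, b ∈ ℂ and let w₁, w₂, w₃, w₄ be nonzero complex numbers with |e_a·w₁/w₄| < 1, |e_b·w₃/w₄| < 1, |w₂w₄/(w₁w₃)| < 1, |e_a·w₂/w₃| < 1, |e_b·w₂/w₁| < 1, and such that w₁w₃/(w₂w₄) and w₄/w₁ are not nonpositive reals, where e_a = e^{πia}, e_b = e^{πib}. Define Φ⁻ on a neighborhood of w₁ by Φ⁻(z) = −(πi(a+b)/2)·Log(z·w₃/(w₂w₄)) + Log(w₃/w₄)·Log(w₄/z) − Li₂(e_a·z/w₄) − Li₂(e_b·w₃/w₄) − Li₂(w₂w₄/(z·w₃)) + Li₂(e_a·w₂/w₃) + Li₂(e_b·w₂/z) + π²/6. Then Φ⁻ has a complex derivative D at w₁, and exp(w₁·D) = e^{πi(−a+b)/2}·(1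 − e_a·w₁/w₄)·(1 − e_b^{−1}·w₁/w₂)·(1 − w₁w₃/(w₂w₄))^{−1} (the inverted factor is nonzero since |w₁w₃/(w₂w₄)| > 1). -/
open Complex Real

lemma one_sub_ne_zero_of_abs_lt {p : ℂ} (h : ‖p‖ < 1) : 1 - p ≠ 0 := by
  intro hp
  rw [sub_eq_zero] at hp
  rw [← hp] at h
  simp at h


lemma aux1 (w₁ w₂ w₃ w₄ ea eb c L0 L1 L2 L3 : ℂ) (h₁ : w₁ ≠ 0) (h₂ : w₂ ≠ 0)
    (h₃ : w₃ ≠ 0) (h₄ : w₄ ≠ 0) (hea0 : ea ≠ 0) (heb0 : eb ≠ 0) :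
    w₁ * (c * ((w₁ * w₃ / (w₂ * w₄))⁻¹ * (1 * w₃ / (w₂ * w₄)))
      + L0 * ((w₄ / w₁)⁻¹ * ((0 * w₁ - w₄ * 1) / w₁ ^ 2))
      - -L1 / (ea * w₁ / w₄) * (ea * 1 / w₄)
      - -L2 / (w₂ * w₄ / (w₁ * w₃)) * ((0 * (w₁ * w₃) - w₂ * w₄ * (1 * w₃)) / (w₁ * w₃) ^ 2)
      + -L3 / (eb * w₂ / w₁) * ((0 * w₁ - eb * w₂ * 1) / w₁ ^ 2))
    = c - L0 + L1 - L2 + L3 := by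
  have e1 : (w₁ * w₃ / (w₂ * w₄))⁻¹ * (1 * w₃ / (w₂ * w₄)) = 1 / w₁ := by
    rw [inv_div]; field_simp
  have e2 : (w₄ / w₁)⁻¹ * ((0 * w₁ - w₄ * 1) / w₁ ^ 2) = -(1 / w₁) := by
    rw [inv_div]; field_simp; ring
  have e3 : -L1 / (ea * w₁ / w₄) * (ea * 1 / w₄) = -(L1 / w₁) := by
    field_simp
  have e4 : -L2 / (w₂ * w₄ / (w₁ * w₃)) * ((0 * (w₁ * w₃) - w₂ * w₄ * (1 * w₃)) / (w₁ * w₃) ^ 2)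
      = L2 / w₁ := by
    field_simp; ring
  have e5 : -L3 / (eb * w₂ / w₁) * ((0 * w₁ - eb * w₂ * 1) / w₁ ^ 2) = L3 / w₁ := by
    field_simp; ring
  rw [e1, e2, e3, e4, e5]
  field_simp
  ring

lemma aux2 (w₁ w₂ w₃ w₄ ea eb E : ℂ) (h₁ : w₁ ≠ 0) (h₂ : w₂ ≠ 0)
    (h₃ : w₃ ≠ 0) (h₄ : w₄ ≠ 0) (heb0 : eb ≠ 0) (hd : w₁ * w₃ - w₂ * w₄ ≠ 0) :
    E / (w₃ / w₄) * (1 - ea * w₁ / w₄) / (1 - w₂ * w₄ / (w₁ * w₃)) * (1 - eb * w₂ / w₁)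
    = E * eb * (1 - ea * w₁ / w₄) * (1 - eb⁻¹ * w₁ / w₂) * (1 - w₁ * w₃ / (w₂ * w₄))⁻¹ := by
  have e1 : 1 - w₂ * w₄ / (w₁ * w₃) = (w₁ * w₃ - w₂ * w₄) / (w₁ * w₃) := by
    field_simp
  have e2 : 1 - w₁ * w₃ / (w₂ * w₄) = -(w₁ * w₃ - w₂ * w₄) / (w₂ * w₄) := by
    rw [neg_sub, sub_div, div_self (mul_ne_zero h₂ h₄)]
  rw [e1, e2]
  obtain ⟨d, hdd⟩ : ∃ d, w₁ * w₃ - w₂ * w₄ = d := ⟨_, rfl⟩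
  rw [hdd] at hd ⊢
  field_simp
  ring

/-- The derivative of the negative-crossing potential function `Φ⁻_c` with respect to the
region parameter `w₁`:  `exp (w₁ ∂Φ⁻/∂w₁)
  = e^{πi(-a+b)/2} (1 - e_a w₁/w₄)(1 - e_b⁻¹ w₁/w₂)(1 - w₁w₃/(w₂w₄))⁻¹`. -/
theorem negative_crossing_region_deriv (a b : ℂ) (w₁ w₂ w₃ w₄ : ℂ)
    (h₁ : w₁ ≠ 0) (h₂ : w₂ ≠ 0) (h₃ : w₃ ≠ 0) (h₄ : w₄ ≠ 0)
    (ea eb : ℂ)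
    (hea : ea = Complex.exp ((Real.pi : ℂ) * Complex.I * a))
    (heb : eb = Complex.exp ((Real.pi : ℂ) * Complex.I * b))
    (ha1 : ‖ea * w₁ / w₄‖ < 1)
    (hb1 : ‖eb * w₃ / w₄‖ < 1)
    (hw : ‖w₂ * w₄ / (w₁ * w₃)‖ < 1)
    (ha2 : ‖ea * w₂ / w₃‖ < 1)
    (hb2 : ‖eb * w₂ / w₁‖ < 1)
    (hslit1 : ¬ ((w₁ * w₃ / (w₂ * w₄)).im = 0 ∧ (w₁ * w₃ / (w₂ * w₄)).re ≤ 0))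
    (hslit2 : ¬ ((w₄ / w₁).im = 0 ∧ (w₄ / w₁).re ≤ 0)) :
    ∃ D : ℂ,
      HasDerivAt (fun z : ℂ =>
          -(((Real.pi : ℂ) * Complex.I * (a + b) / 2)) * Complex.log (z * w₃ / (w₂ * w₄))
            + Complex.log (w₃ / w₄) * Complex.log (w₄ / z)
            - Li2 (ea * z / w₄) - Li2 (eb * w₃ / w₄)
            - Li2 (w₂ * w₄ / (z * w₃)) + Li2 (ea * w₂ / w₃) + Li2 (eb * w₂ / z)
            + (Real.pi : ℂ) ^ 2 / 6) D w₁ ∧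
      Complex.exp (w₁ * D)
        = Complex.exp ((Real.pi : ℂ) * Complex.I * (-a + b) / 2)
            * (1 - ea * w₁ / w₄) * (1 - eb⁻¹ * w₁ / w₂)
            * (1 - w₁ * w₃ / (w₂ * w₄))⁻¹ := by
  have hea0 : ea ≠ 0 := hea ▸ Complex.exp_ne_zero _
  have heb0 : eb ≠ 0 := heb ▸ Complex.exp_ne_zero _
  have hp1 : ea * w₁ / w₄ ≠ 0 := div_ne_zero (mul_ne_zero hea0 h₁) h₄
  have hp2 : w₂ * w₄ / (w₁ * w₃) ≠ 0 := div_ne_zero (mul_ne_zero h₂ h₄) (mul_ne_zero h₁ h₃)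
  have hp3 : eb * w₂ / w₁ ≠ 0 := div_ne_zero (mul_ne_zero heb0 h₂) h₁
  have hne1 : (1 : ℂ) - ea * w₁ / w₄ ≠ 0 := one_sub_ne_zero_of_abs_lt ha1
  have hne2 : (1 : ℂ) - w₂ * w₄ / (w₁ * w₃) ≠ 0 := one_sub_ne_zero_of_abs_lt hw
  have hne3 : (1 : ℂ) - eb * w₂ / w₁ ≠ 0 := one_sub_ne_zero_of_abs_lt hb2
  have hd : w₁ * w₃ - w₂ * w₄ ≠ 0 := by
    intro h
    apply hne2
    rw [sub_eq_zero] at h ⊢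
    rw [← h, div_self (mul_ne_zero h₁ h₃)]
  have hs1 : w₁ * w₃ / (w₂ * w₄) ∈ Complex.slitPlane := by
    rw [Complex.mem_slitPlane_iff]
    push_neg at hslit1
    by_cases h : (w₁ * w₃ / (w₂ * w₄)).im = 0
    · exact Or.inl (hslit1 h)
    · exact Or.inr h
  have hs2 : w₄ / w₁ ∈ Complex.slitPlane := by
    rw [Complex.mem_slitPlane_iff]
    push_neg at hslit2
    by_cases h : (w₄ / w₁).im = 0
    · exact Or.inl (hslit2 h)
    · exact Or.inr h
  -- the individual derivatives
  have hinner1 : HasDerivAt (fun z : ℂ => z * w₃ / (w₂ * w₄)) (1 * w₃ / (w₂ * w₄)) w₁ :=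
    ((hasDerivAt_id w₁).mul_const w₃).div_const (w₂ * w₄)
  have hT1 := ((Complex.hasDerivAt_log hs1).comp w₁ hinner1).const_mul
      (-(((Real.pi : ℂ) * Complex.I * (a + b) / 2)))
  have hinner2 : HasDerivAt (fun z : ℂ => w₄ / z) ((0 * w₁ - w₄ * 1) / w₁ ^ 2) w₁ :=
    (hasDerivAt_const w₁ w₄).div (hasDerivAt_id w₁) h₁
  have hT2 := ((Complex.hasDerivAt_log hs2).comp w₁ hinner2).const_mul
      (Complex.log (w₃ / w₄))
  have hinner3 : HasDerivAt (fun z : ℂ => ea * z / w₄) (ea * 1 / w₄) w₁ :=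
    ((hasDerivAt_id w₁).const_mul ea).div_const w₄
  have hT3 := (Li2_hasDerivAt ha1 hp1).comp w₁ hinner3
  have hinner5 : HasDerivAt (fun z : ℂ => w₂ * w₄ / (z * w₃))
      ((0 * (w₁ * w₃) - w₂ * w₄ * (1 * w₃)) / (w₁ * w₃) ^ 2) w₁ :=
    (hasDerivAt_const w₁ (w₂ * w₄)).div ((hasDerivAt_id w₁).mul_const w₃) (mul_ne_zero h₁ h₃)
  have hT5 := (Li2_hasDerivAt hw hp2).comp w₁ hinner5
  have hinner7 : HasDerivAt (fun z : ℂ => eb * w₂ / z) ((0 * w₁ - eb * w₂ * 1) / w₁ ^ 2) w₁ :=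
    (hasDerivAt_const w₁ (eb * w₂)).div (hasDerivAt_id w₁) h₁
  have hT7 := (Li2_hasDerivAt hb2 hp3).comp w₁ hinner7
  simp only [Function.comp_def] at hT1 hT2 hT3 hT5 hT7
  have hF := (((((hT1.add hT2).sub hT3).sub_const (Li2 (eb * w₃ / w₄))).sub hT5).add_const
      (Li2 (ea * w₂ / w₃))).add hT7 |>.add_const ((Real.pi : ℂ) ^ 2 / 6)
  refine ⟨_, hF, ?_⟩
  rw [aux1 w₁ w₂ w₃ w₄ ea eb (-((Real.pi : ℂ) * Complex.I * (a + b) / 2))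
    (Complex.log (w₃ / w₄)) (Complex.log (1 - ea * w₁ / w₄))
    (Complex.log (1 - w₂ * w₄ / (w₁ * w₃))) (Complex.log (1 - eb * w₂ / w₁))
    h₁ h₂ h₃ h₄ hea0 heb0]
  have hsplit : Complex.exp ((Real.pi : ℂ) * Complex.I * (-a + b) / 2)
      = Complex.exp (-((Real.pi : ℂ) * Complex.I * (a + b) / 2)) * eb := by
    rw [heb, ← Complex.exp_add]
    congr 1
    ring
  rw [hsplit, Complex.exp_add, Complex.exp_sub, Complex.exp_add, Complex.exp_sub,
    Complex.exp_log (div_ne_zero h₃ h₄), Complex.exp_log hne1, Complex.exp_log hne2,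
    Complex.exp_log hne3]
  exact aux2 w₁ w₂ w₃ w₄ ea eb _ h₁ h₂ h₃ h₄ heb0 hd
end
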